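/- With the bipartite construction of G and A: the normalizing constant of the spanning-tree DPP equals the number of perfect matchings of the bipartite graph; that is, Σ_{S ⊆ F ⊕ F, S induces a spanning tree of G} det(A_S) equals the cardinality of {π : Equiv.Perm (Fin n) | ∀ i, (i, π i) ∈ F}. -/

import Mathlib

open scoped Classical

/-- The principal minor of `A` on the index set `S` (equal to `1` when `S = ∅`). -/
noncomputable def principalMinor {ι : Type*} [DecidableEq ι]
    (A : Matrix ι ι ℝ) (S : Finset ι) : ℝ :=
  (A.submatrix (fun i : ↥S => (i : ι)) (fun i : ↥S => (i : ι))).det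

/-- The edge of the graph `G` associated with an edge index in `F ⊕ F`:
the left edge `{u_i, u_i w_j}` and the right edge `{u_i w_j, u_{i+1}}`. -/
def bipEdge {n : ℕ} (F : Finset (Fin n × Fin n)) :
    (↥F ⊕ ↥F) → Sym2 (Fin (n + 1) ⊕ ↥F)
  | Sum.inl e => s(Sum.inl (e : Fin n × Fin n).1.castSucc, Sum.inr e)
  | Sum.inr e => s(Sum.inr e, Sum.inl (e : Fin n × Fin n).1.succ)

/-- The spanning subgraph of `G` whose edges are those indexed by `S ⊆ F ⊕ F`. -/
def bipSubgraph {n : ℕ} (F : Finset (Fin n × Fin n)) (S : Finset (↥F ⊕ ↥F)) :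
    SimpleGraph (Fin (n + 1) ⊕ ↥F) :=
  SimpleGraph.fromEdgeSet (bipEdge F '' ↑S)

/-- The matrix `A` of the construction: the left-left block records equality of the
second coordinates, the right-right block is the identity, the off-diagonal blocks vanish. -/
def bipMatrix {n : ℕ} (F : Finset (Fin n × Fin n)) : Matrix (↥F ⊕ ↥F) (↥F ⊕ ↥F) ℝ :=
  Matrix.of fun p q =>
    match p, q with
    | Sum.inl e₁, Sum.inl e₂ =>
        if (e₁ : Fin n × Fin n).2 = (e₂ : Fin n × Fin n).2 then 1 else 0
    | Sum.inr e, Sum.inr e' => if e = e' then 1 else 0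
    | _, _ => 0

open Finset
lemma conn_card_le {V : Type*} [Fintype V] (G : SimpleGraph V) [Fintype G.edgeSet]
    (h : G.Connected) : Fintype.card V ≤ G.edgeFinset.card + 1 := by
  classical
  have hne : Nonempty V := h.nonempty
  inhabit V
  have key : ∀ w : V, w ≠ default →
      ∃ x : V, G.Adj w x ∧ G.dist x default + 1 = G.dist w default := by
    intro w hw
    obtain ⟨p, hp⟩ := h.exists_walk_length_eq_dist w default
    cases p with
    | nil => exact absurd rfl hw
    | @cons _ x _ ha q =>
      refine ⟨x, ha, le_antisymm ?_ ?_⟩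
      · have h1 : G.dist x default ≤ q.length := SimpleGraph.dist_le q
        simp only [SimpleGraph.Walk.length_cons] at hp
        omega
      · obtain ⟨q', hq'⟩ := h.exists_walk_length_eq_dist x default
        have h2 := SimpleGraph.dist_le (SimpleGraph.Walk.cons ha q')
        simp only [SimpleGraph.Walk.length_cons, hq'] at h2
        omega
  choose! x hadj hdist using key
  have hmaps : ∀ w ∈ ({default}ᶜ : Finset V), s(w, x w) ∈ G.edgeFinset := by
    intro w hw
    rw [SimpleGraph.mem_edgeFinset, SimpleGraph.mem_edgeSet]
    exact hadj w (by simpa using hw)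
  have hinj : (↑({default}ᶜ : Finset V) : Set V).InjOn (fun w => s(w, x w)) := by
    intro a ha b hb hab
    simp only [Finset.coe_compl, Finset.coe_singleton, Set.mem_compl_iff,
      Set.mem_singleton_iff] at ha hb
    rcases Sym2.eq_iff.mp hab with ⟨h1, _⟩ | ⟨h1, h2⟩
    · exact h1
    · have da := hdist a ha
      have db := hdist b hb
      rw [← h1] at db
      rw [h2] at da
      omega
  have hcard := Finset.card_le_card_of_injOn _ hmaps hinj
  have h3 : ({default}ᶜ : Finset V).card = Fintype.card V - 1 := by
    simp [Finset.card_compl]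
  have hpos : 1 ≤ Fintype.card V := Fintype.card_pos
  omega

lemma isTree_of_connected_of_card {V : Type*} [Fintype V] (G : SimpleGraph V) [Fintype G.edgeSet]
    (h : G.Connected) (hcard : G.edgeFinset.card + 1 = Fintype.card V) : G.IsTree := by
  classical
  refine ⟨h, ?_⟩
  intro v c hc
  cases c with
  | nil => exact hc.ne_nil rfl
  | @cons _ u _ ha q =>
    have hmem : s(v, u) ∈ (SimpleGraph.Walk.cons ha q).edges := by simp
    have hreach : (G \ SimpleGraph.fromEdgeSet {s(v, u)}).Reachable v u :=
      (SimpleGraph.adj_and_reachable_delete_edges_iff_exists_cycle.mpr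
        ⟨v, SimpleGraph.Walk.cons ha q, hc, hmem⟩).2
    set G' := G \ SimpleGraph.fromEdgeSet {s(v, u)} with hG'
    have hwr : ∀ {a b : V}, G.Walk a b → G'.Reachable a b := by
      intro a b p
      induction p with
      | nil => exact SimpleGraph.Reachable.refl _
      | @cons a c b h' p' ih =>
        refine SimpleGraph.Reachable.trans ?_ ih
        by_cases he : s(a, c) = s(v, u)
        · rcases Sym2.eq_iff.mp he with ⟨rfl, rfl⟩ | ⟨rfl, rfl⟩
          · exact hreach
          · exact hreach.symm
        · refine SimpleGraph.Adj.reachable ?_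
          rw [hG', SimpleGraph.sdiff_adj]
          refine ⟨h', ?_⟩
          rw [SimpleGraph.fromEdgeSet_adj]
          rintro ⟨h1, -⟩
          exact he (by simpa using h1)
    have hconn' : G'.Connected := by
      haveI := h.nonempty
      exact SimpleGraph.Connected.mk (fun a b => hwr ((h.preconnected a b).some))
    haveI : Fintype ↥G'.edgeSet := Fintype.ofFinite _
    have hedge : G'.edgeFinset = G.edgeFinset.erase s(v, u) := by
      ext e
      simp only [SimpleGraph.mem_edgeFinset, Finset.mem_erase, hG',
        SimpleGraph.edgeSet_sdiff, SimpleGraph.edgeSet_fromEdgeSet,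
        SimpleGraph.edgeSet_sdiff_sdiff_isDiag, Set.mem_diff, Set.mem_singleton_iff]
      tauto
    have h1 := conn_card_le G' hconn'
    rw [hedge, Finset.card_erase_of_mem (by simp [ha])] at h1
    have hE : 1 ≤ G.edgeFinset.card := Finset.card_pos.mpr ⟨s(v, u), by simp [ha]⟩
    omega

section Bip

variable {n : ℕ} (F : Finset (Fin n × Fin n))

def PinjP (S : Finset (↥F ⊕ ↥F)) : Prop :=
  ∀ e₁ e₂ : ↥F, Sum.inl e₁ ∈ S → Sum.inl e₂ ∈ S →
    (e₁ : Fin n × Fin n).2 = (e₂ : Fin n × Fin n).2 → e₁ = e₂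

lemma principalMinor_bipMatrix (S : Finset (↥F ⊕ ↥F)) :
    principalMinor (bipMatrix F) S = if PinjP F S then 1 else 0 := by
  split_ifs with h
  · have hid : (bipMatrix F).submatrix (fun i : ↥S => (i : ↥F ⊕ ↥F))
        (fun i : ↥S => (i : ↥F ⊕ ↥F)) = 1 := by
      ext ⟨p, hp⟩ ⟨q, hq⟩
      match p, q with
      | Sum.inl e₁, Sum.inl e₂ =>
        simp only [Matrix.submatrix_apply, bipMatrix, Matrix.of_apply, Matrix.one_apply,
          Subtype.mk.injEq, Sum.inl.injEq]
        refine if_congr ⟨fun hh => h e₁ e₂ hp hq hh, fun hh => by rw [hh]⟩ rfl rfl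
      | Sum.inl e₁, Sum.inr e₂ =>
        simp [bipMatrix, Matrix.one_apply]
      | Sum.inr e₁, Sum.inl e₂ =>
        simp [bipMatrix, Matrix.one_apply]
      | Sum.inr e₁, Sum.inr e₂ =>
        simp only [Matrix.submatrix_apply, bipMatrix, Matrix.of_apply, Matrix.one_apply,
          Subtype.mk.injEq, Sum.inr.injEq]
    rw [principalMinor, hid, Matrix.det_one]
  · rw [principalMinor]
    unfold PinjP at h
    push_neg at h
    obtain ⟨e₁, e₂, h₁, h₂, hsnd, hne⟩ := h
    refine Matrix.det_zero_of_row_eq (i := ⟨Sum.inl e₁, h₁⟩) (j := ⟨Sum.inl e₂, h₂⟩)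
      (by simp [Subtype.mk.injEq, hne]) ?_
    funext ⟨q, hq⟩
    match q with
    | Sum.inl e => simp [bipMatrix, hsnd]
    | Sum.inr e => simp [bipMatrix]

lemma bipEdge_inj : Function.Injective (bipEdge F) := by
  have hcs : ∀ i : Fin n, i.castSucc ≠ i.succ := fun i => (Fin.castSucc_lt_succ : i.castSucc < i.succ).ne
  intro x y hxy
  match x, y with
  | Sum.inl a, Sum.inl b =>
    simp only [bipEdge, Sym2.eq_iff, Sum.inl.injEq, Sum.inr.injEq] at hxy
    rcases hxy with ⟨-, rfl⟩ | ⟨h1, h2⟩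
    · rfl
    · exact absurd h1 (by simp)
  | Sum.inl a, Sum.inr b =>
    exfalso
    simp only [bipEdge, Sym2.eq_iff, Sum.inl.injEq, Sum.inr.injEq] at hxy
    rcases hxy with ⟨h1, -⟩ | ⟨h1, h2⟩
    · exact absurd h1 (by simp)
    · subst h2; exact hcs _ h1
  | Sum.inr a, Sum.inl b =>
    exfalso
    simp only [bipEdge, Sym2.eq_iff, Sum.inl.injEq, Sum.inr.injEq] at hxy
    rcases hxy with ⟨h1, -⟩ | ⟨h1, h2⟩
    · exact absurd h1 (by simp)
    · subst h1; exact hcs _ h2.symm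
  | Sum.inr a, Sum.inr b =>
    simp only [bipEdge, Sym2.eq_iff, Sum.inl.injEq, Sum.inr.injEq] at hxy
    rcases hxy with ⟨rfl, -⟩ | ⟨h1, h2⟩
    · rfl
    · exact absurd h1 (by simp)


lemma bip_edgeFinset (S : Finset (↥F ⊕ ↥F)) :
    (bipSubgraph F S).edgeFinset = S.image (bipEdge F) := by
  ext e
  rw [SimpleGraph.mem_edgeFinset]
  simp only [SimpleGraph.mem_edgeFinset, bipSubgraph, SimpleGraph.edgeSet_fromEdgeSet,
    Set.mem_diff, Set.mem_image, Finset.mem_coe, Finset.mem_image, Set.mem_setOf_eq]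
  constructor
  · rintro ⟨⟨x, hx, rfl⟩, -⟩; exact ⟨x, hx, rfl⟩
  · rintro ⟨x, hx, rfl⟩
    refine ⟨⟨x, hx, rfl⟩, ?_⟩
    match x with
    | Sum.inl a => simp [bipEdge]
    | Sum.inr a => simp [bipEdge]

lemma bip_adj_left {S : Finset (↥F ⊕ ↥F)} {e : ↥F} (he : Sum.inl e ∈ S) :
    (bipSubgraph F S).Adj (Sum.inl (e : Fin n × Fin n).1.castSucc) (Sum.inr e) := by
  rw [bipSubgraph, SimpleGraph.fromEdgeSet_adj]
  exact ⟨⟨Sum.inl e, he, rfl⟩, by simp⟩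

lemma bip_adj_right {S : Finset (↥F ⊕ ↥F)} {e : ↥F} (he : Sum.inr e ∈ S) :
    (bipSubgraph F S).Adj (Sum.inr e) (Sum.inl (e : Fin n × Fin n).1.succ) := by
  rw [bipSubgraph, SimpleGraph.fromEdgeSet_adj]
  exact ⟨⟨Sum.inr e, he, rfl⟩, by simp⟩

lemma bip_connected {S : Finset (↥F ⊕ ↥F)} (hR : ∀ e : ↥F, Sum.inr e ∈ S)
    (hL : ∀ i : Fin n, ∃ e : ↥F, (e : Fin n × Fin n).1 = i ∧ Sum.inl e ∈ S) :
    (bipSubgraph F S).Connected := by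
  rw [SimpleGraph.connected_iff]
  refine ⟨?_, ⟨Sum.inl 0⟩⟩
  have hu : ∀ i : Fin (n + 1), (bipSubgraph F S).Reachable (Sum.inl 0) (Sum.inl i) := by
    intro i
    induction i using Fin.induction with
    | zero => exact SimpleGraph.Reachable.refl _
    | succ i ih =>
      obtain ⟨e, he1, he2⟩ := hL i
      have a1 := bip_adj_left F he2
      have a2 := bip_adj_right F (hR e)
      rw [he1] at a1 a2
      exact ih.trans (a1.reachable.trans a2.reachable)
  have key : ∀ v, (bipSubgraph F S).Reachable (Sum.inl 0) v := by
    intro v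
    match v with
    | Sum.inl i => exact hu i
    | Sum.inr e => exact (hu _).trans (bip_adj_right F (hR e)).symm.reachable
  exact fun a b => (key a).symm.trans (key b)

lemma S_decomp (S : Finset (↥F ⊕ ↥F)) :
    S = (univ.filter fun e : ↥F => Sum.inl e ∈ S).image Sum.inl ∪
        (univ.filter fun e : ↥F => Sum.inr e ∈ S).image Sum.inr := by
  ext x
  match x with
  | Sum.inl e => simp
  | Sum.inr e => simp

lemma S_card (S : Finset (↥F ⊕ ↥F)) :
    S.card = (univ.filter fun e : ↥F => Sum.inl e ∈ S).card +
      (univ.filter fun e : ↥F => Sum.inr e ∈ S).card := by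
  conv_lhs => rw [S_decomp F S]
  rw [Finset.card_union_of_disjoint, Finset.card_image_of_injective _ Sum.inl_injective,
    Finset.card_image_of_injective _ Sum.inr_injective]
  simp [Finset.disjoint_left]

def bipTreeSet (π : Equiv.Perm (Fin n)) : Finset (↥F ⊕ ↥F) :=
  (univ.filter fun e : ↥F => (e : Fin n × Fin n).2 = π (e : Fin n × Fin n).1).image Sum.inl ∪
    univ.image Sum.inr

lemma card_bipTreeSet (π : Equiv.Perm (Fin n)) (hπ : ∀ i, (i, π i) ∈ F) :
    (bipTreeSet F π).card = n + F.card := by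
  rw [bipTreeSet, Finset.card_union_of_disjoint (by simp [Finset.disjoint_left]),
    Finset.card_image_of_injective _ Sum.inl_injective,
    Finset.card_image_of_injective _ Sum.inr_injective, Finset.card_univ, Fintype.card_coe]
  congr 1
  have : #(filter (fun e : ↥F => (e : Fin n × Fin n).2 = π (e : Fin n × Fin n).1) univ)
      = #(univ : Finset (Fin n)) := by
    refine Finset.card_bij (fun e _ => (e : Fin n × Fin n).1) (fun _ _ => Finset.mem_univ _)
      ?_ ?_
    · intro e₁ h₁ e₂ h₂ hfst
      simp only [Finset.mem_filter, Finset.mem_univ, true_and] at h₁ h₂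
      exact Subtype.ext (Prod.ext hfst (by rw [h₁, h₂]; exact congrArg π hfst))
    · intro i _
      refine ⟨⟨(i, π i), hπ i⟩, by simp, rfl⟩
  simpa using this

lemma pinj_bipTreeSet (π : Equiv.Perm (Fin n)) : PinjP F (bipTreeSet F π) := by
  intro e₁ e₂ h₁ h₂ hsnd
  simp only [bipTreeSet, Finset.mem_union, Finset.mem_image, Finset.mem_filter,
    Finset.mem_univ, true_and, Sum.inl.injEq, reduceCtorEq, exists_false, or_false,
    exists_eq_right] at h₁ h₂
  exact Subtype.ext (Prod.ext (π.injective (by rw [← h₁, ← h₂, hsnd])) hsnd)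

lemma bipTreeSet_isTree (π : Equiv.Perm (Fin n)) (hπ : ∀ i, (i, π i) ∈ F) :
    (bipSubgraph F (bipTreeSet F π)).IsTree := by
  apply isTree_of_connected_of_card
  · apply bip_connected
    · intro e; simp [bipTreeSet]
    · intro i
      refine ⟨⟨(i, π i), hπ i⟩, rfl, ?_⟩
      simp [bipTreeSet]
  · rw [bip_edgeFinset, Finset.card_image_of_injective _ (bipEdge_inj F),
      card_bipTreeSet F π hπ]
    simp only [Fintype.card_sum, Fintype.card_fin, Fintype.card_coe]
    omega

lemma bipTreeSet_injective {π π' : Equiv.Perm (Fin n)} (hπ : ∀ i, (i, π i) ∈ F)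
    (h : bipTreeSet F π = bipTreeSet F π') : π = π' := by
  apply Equiv.ext
  intro i
  have h1 : Sum.inl (⟨(i, π i), hπ i⟩ : ↥F) ∈ bipTreeSet F π := by simp [bipTreeSet]
  rw [h] at h1
  simp only [bipTreeSet, Finset.mem_union, Finset.mem_image, Finset.mem_filter,
    Finset.mem_univ, true_and, Sum.inl.injEq, reduceCtorEq, exists_false, or_false,
    exists_eq_right] at h1
  exact h1

lemma tree_pinj_struct (S : Finset (↥F ⊕ ↥F)) (hT : (bipSubgraph F S).IsTree)
    (hP : PinjP F S) :
    ∃ π : Equiv.Perm (Fin n), (∀ i, (i, π i) ∈ F) ∧ S = bipTreeSet F π := by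
  classical
  set L := univ.filter (fun e : ↥F => Sum.inl e ∈ S) with hLdef
  set R := univ.filter (fun e : ↥F => Sum.inr e ∈ S) with hRdef
  have hLmem : ∀ e ∈ L, Sum.inl e ∈ S := fun e he => (Finset.mem_filter.mp he).2
  have hcardS : S.card = n + F.card := by
    have h1 := hT.card_edgeFinset
    rw [bip_edgeFinset, Finset.card_image_of_injective _ (bipEdge_inj F)] at h1
    simp only [Fintype.card_sum, Fintype.card_fin, Fintype.card_coe] at h1
    omega
  have hLR : L.card + R.card = S.card := (S_card F S).symm
  have hLle : L.card ≤ n := by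
    have := Finset.card_le_card_of_injOn (fun e : ↥F => (e : Fin n × Fin n).2)
      (s := L) (t := univ) (fun _ _ => Finset.mem_univ _)
      (fun e₁ h₁ e₂ h₂ hh => hP e₁ e₂ (hLmem _ h₁) (hLmem _ h₂) hh)
    simpa using this
  have hRle : R.card ≤ F.card := by
    have := Finset.card_le_univ R
    simpa [Fintype.card_coe] using this
  have hLcard : L.card = n := by omega
  have hRcard : R.card = F.card := by omega
  have hR : R = univ := Finset.eq_univ_of_card R (by simpa [Fintype.card_coe] using hRcard)
  have hRmem : ∀ e : ↥F, Sum.inr e ∈ S := by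
    intro e
    have : e ∈ R := hR ▸ Finset.mem_univ e
    exact (Finset.mem_filter.mp this).2
  -- first coordinates are distinct on L
  have hfst : ∀ e₁ ∈ L, ∀ e₂ ∈ L, (e₁ : Fin n × Fin n).1 = (e₂ : Fin n × Fin n).1 → e₁ = e₂ := by
    intro e₁ h₁ e₂ h₂ h12
    by_contra hne
    have m₁ : Sum.inl e₁ ∈ S := hLmem _ h₁
    have m₂ : Sum.inl e₂ ∈ S := hLmem _ h₂
    set i := (e₁ : Fin n × Fin n).1 with hi
    have a1 : (bipSubgraph F S).Adj (Sum.inl i.castSucc) (Sum.inr e₁) := bip_adj_left F m₁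
    have b1 : (bipSubgraph F S).Adj (Sum.inr e₁) (Sum.inl i.succ) := bip_adj_right F (hRmem e₁)
    have a2 : (bipSubgraph F S).Adj (Sum.inl i.castSucc) (Sum.inr e₂) := by
      have := bip_adj_left F m₂; rwa [← h12] at this
    have b2 : (bipSubgraph F S).Adj (Sum.inr e₂) (Sum.inl i.succ) := by
      have := bip_adj_right F (hRmem e₂); rwa [← h12] at this
    have hcs : (Sum.inl i.castSucc : Fin (n+1) ⊕ ↥F) ≠ Sum.inl i.succ := by
      simp [(Fin.castSucc_lt_succ : i.castSucc < i.succ).ne]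
    let p₁ : (bipSubgraph F S).Walk (Sum.inl i.castSucc) (Sum.inl i.succ) :=
      SimpleGraph.Walk.cons a1 (SimpleGraph.Walk.cons b1 SimpleGraph.Walk.nil)
    let p₂ : (bipSubgraph F S).Walk (Sum.inl i.castSucc) (Sum.inl i.succ) :=
      SimpleGraph.Walk.cons a2 (SimpleGraph.Walk.cons b2 SimpleGraph.Walk.nil)
    have hp₁ : p₁.IsPath := by
      simp [p₁, SimpleGraph.Walk.isPath_def, hcs]
    have hp₂ : p₂.IsPath := by
      simp [p₂, SimpleGraph.Walk.isPath_def, hcs]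
    have heq : p₁ = p₂ := (hT.existsUnique_path (Sum.inl i.castSucc) (Sum.inl i.succ)).unique hp₁ hp₂
    have := congrArg SimpleGraph.Walk.support heq
    simp only [p₁, p₂, SimpleGraph.Walk.support_cons, SimpleGraph.Walk.support_nil,
      List.cons.injEq, Sum.inr.injEq, and_true, true_and] at this
    exact hne this
  -- build the permutation
  have hcardL' : Fintype.card ↥L = n := by rw [Fintype.card_coe, hLcard]
  let g : ↥L → Fin n := fun e => ((e : ↥F) : Fin n × Fin n).1
  have hg : Function.Injective g := fun a b hab =>
    Subtype.ext (hfst _ a.2 _ b.2 hab)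
  have hgbij : Function.Bijective g :=
    (Fintype.bijective_iff_injective_and_card g).mpr ⟨hg, by rw [hcardL', Fintype.card_fin]⟩
  let eqv := Equiv.ofBijective g hgbij
  have hfst' : ∀ i : Fin n, (((eqv.symm i : ↥L) : ↥F) : Fin n × Fin n).1 = i :=
    fun i => eqv.apply_symm_apply i
  let f : Fin n → Fin n := fun i => (((eqv.symm i : ↥L) : ↥F) : Fin n × Fin n).2
  have hfinj : Function.Injective f := by
    intro i j hij
    have h1 : ((eqv.symm i : ↥L) : ↥F) = ((eqv.symm j : ↥L) : ↥F) :=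
      hP _ _ (hLmem _ (eqv.symm i).2) (hLmem _ (eqv.symm j).2) hij
    have h2 : (eqv.symm i : ↥L) = (eqv.symm j : ↥L) := Subtype.ext h1
    simpa using congrArg eqv h2
  let π : Equiv.Perm (Fin n) := Equiv.ofBijective f (Finite.injective_iff_bijective.mp hfinj)
  have hπF : ∀ i, (i, π i) ∈ F := by
    intro i
    have hpair : (i, π i) = (((eqv.symm i : ↥L) : ↥F) : Fin n × Fin n) :=
      Prod.ext (hfst' i).symm rfl
    rw [hpair]
    exact ((eqv.symm i : ↥L) : ↥F).2
  refine ⟨π, hπF, ?_⟩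
  have hLeq : L = univ.filter
      (fun e : ↥F => (e : Fin n × Fin n).2 = π (e : Fin n × Fin n).1) := by
    ext e
    simp only [Finset.mem_filter, Finset.mem_univ, true_and]
    constructor
    · intro he
      have h1 : eqv.symm ((e : Fin n × Fin n).1) = ⟨e, by rwa [hLdef]⟩ :=
        (Equiv.symm_apply_eq eqv).mpr rfl
      show (e : Fin n × Fin n).2 = π ((e : Fin n × Fin n).1)
      show (e : Fin n × Fin n).2 = (((eqv.symm ((e : Fin n × Fin n).1) : ↥L) : ↥F) : Fin n × Fin n).2
      rw [h1]
    · intro he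
      have h2 : ((eqv.symm ((e : Fin n × Fin n).1) : ↥L) : ↥F) = e := by
        refine Subtype.ext (Prod.ext (hfst' _) ?_)
        exact he.symm
      have := (eqv.symm ((e : Fin n × Fin n).1)).2
      rwa [h2] at this
  conv_lhs => rw [S_decomp F S]
  rw [bipTreeSet, ← hLdef, ← hRdef, hLeq, hR]

end Bip

open Finset in
/-- The normalizing constant of the spanning-tree DPP given by `A` and `G` equals the
number of perfect matchings of the bipartite graph `(U, W; F)`. -/
theorem bip_spanningTreeDPP_eq_card_perfectMatchings {n : ℕ} (hn : 1 ≤ n)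
    (F : Finset (Fin n × Fin n)) :
    ∑ S ∈ Finset.univ.filter (fun S : Finset (↥F ⊕ ↥F) => (bipSubgraph F S).IsTree),
        principalMinor (bipMatrix F) S
      = ((Finset.univ.filter
          (fun π : Equiv.Perm (Fin n) => ∀ i, (i, π i) ∈ F)).card : ℝ) := by
  classical
  have hcardbij :
      ((Finset.univ.filter fun S : Finset (↥F ⊕ ↥F) => (bipSubgraph F S).IsTree).filter
        (PinjP F)).card
      = (Finset.univ.filter (fun π : Equiv.Perm (Fin n) => ∀ i, (i, π i) ∈ F)).card := by
    refine (Finset.card_bij (fun π _ => bipTreeSet F π) ?_ ?_ ?_).symm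
    · intro π hπ
      simp only [Finset.mem_filter, Finset.mem_univ, true_and] at hπ ⊢
      exact ⟨bipTreeSet_isTree F π hπ, pinj_bipTreeSet F π⟩
    · intro π₁ h₁ π₂ h₂ hh
      simp only [Finset.mem_filter, Finset.mem_univ, true_and] at h₁
      exact bipTreeSet_injective F h₁ hh
    · intro S hS
      simp only [Finset.mem_filter, Finset.mem_univ, true_and] at hS
      obtain ⟨π, hπ, rfl⟩ := tree_pinj_struct F S hS.1 hS.2
      exact ⟨π, by simp [hπ], rfl⟩
  calc ∑ S ∈ Finset.univ.filter (fun S : Finset (↥F ⊕ ↥F) => (bipSubgraph F S).IsTree),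
        principalMinor (bipMatrix F) S
      = ∑ S ∈ Finset.univ.filter (fun S : Finset (↥F ⊕ ↥F) => (bipSubgraph F S).IsTree),
          (if PinjP F S then (1 : ℝ) else 0) :=
        Finset.sum_congr rfl fun S _ => principalMinor_bipMatrix F S
    _ = ∑ _S ∈ (Finset.univ.filter
          (fun S : Finset (↥F ⊕ ↥F) => (bipSubgraph F S).IsTree)).filter (PinjP F),
          (1 : ℝ) := (Finset.sum_filter _ _).symm
    _ = (((Finset.univ.filter
          (fun S : Finset (↥F ⊕ ↥F) => (bipSubgraph F S).IsTree)).filter (PinjP F)).card : ℝ) := by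
        rw [Finset.sum_const, nsmul_eq_mul, mul_one]
    _ = ((Finset.univ.filter
          (fun π : Equiv.Perm (Fin n) => ∀ i, (i, π i) ∈ F)).card : ℝ) := by
        rw [hcardbij]
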